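/- Let P be a d×d real orthogonal projection matrix of rank p with 1 ≤ p ≤ d−1, P⊥ = I − P, q = d − p, λ₁, λ₂ ≥ 1, γ ≥ 0, and θ* ∈ ℝ^d. For each round k = 1,…,n let A_k be a finite nonempty set of arms with contexts x_a ∈ ℝ^d satisfying ‖x_a‖ ≤ 1, let B₀ = λ₁·P⊥ + λ₂·P and B_k = B_{k−1} + x_{a_k} x_{a_k}ᵀ where a_k ∈ A_k is the chosen arm, and let θ̂_{k−1} ∈ ℝ^d. Suppose that at each round k: (i) |x_aᵀ(θ̂_{k−1} − θ*)| ≤ γ·‖x_a‖_{B_{k−1}⁻¹} for all a ∈ A_k, and (ii) a_k maximizes UCB(a) = x_aᵀθ̂_{k−1} + γ·‖x_a‖_{B_{k−1}⁻¹} over A_k. Then, with a_k* maximizing x_aᵀθ* over A_k, the cumulative pseudo-regret satisfies ∑_{k=1}^n (x_{a_k*} − x_{a_k})ᵀθ* ≤ 2γ·√( 2n·( p·log(1 + n/(p·λ₂)) + q·log(1 + n/(q·λ₁)) ) ). -/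

import Mathlib

open Matrix

namespace ProjUCB

variable {d : ℕ}

lemma psd_dot {M : Matrix (Fin d) (Fin d) ℝ} (hM : M.PosSemidef) (x : Fin d → ℝ) :
    0 ≤ x ⬝ᵥ (M *ᵥ x) := by
  simpa using hM.dotProduct_mulVec_nonneg x

lemma smul_posSemidef {c : ℝ} (hc : 0 ≤ c) {M : Matrix (Fin d) (Fin d) ℝ}
    (hM : M.PosSemidef) : (c • M).PosSemidef := by
  refine Matrix.PosSemidef.of_dotProduct_mulVec_nonneg ?_ fun x => ?_
  · unfold Matrix.IsHermitian
    rw [conjTranspose_smul, hM.1]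
    simp
  · rw [smul_mulVec, dotProduct_smul]
    exact smul_nonneg hc (hM.dotProduct_mulVec_nonneg x)

lemma dot_self_nonneg (x : Fin d → ℝ) : 0 ≤ x ⬝ᵥ x :=
  Finset.sum_nonneg fun i _ => mul_self_nonneg (x i)

lemma psd_diag_nonneg {M : Matrix (Fin d) (Fin d) ℝ} (hM : M.PosSemidef) (i : Fin d) :
    0 ≤ M i i := by
  have := psd_dot hM (Pi.single i 1)
  simpa [Matrix.mulVec_single, dotProduct, Pi.single_apply] using this

/-- B ⪰ 1 implies xᵀB⁻¹x ≤ xᵀx -/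
lemma inv_quad_le {M : Matrix (Fin d) (Fin d) ℝ} (hM : M.PosDef)
    (h1 : (M - 1).PosSemidef) (x : Fin d → ℝ) :
    x ⬝ᵥ (M⁻¹ *ᵥ x) ≤ x ⬝ᵥ x := by
  set y := M⁻¹ *ᵥ x with hy
  have hxy : M *ᵥ y = x := by
    rw [hy, mulVec_mulVec, Matrix.mul_nonsing_inv _ hM.det_pos.ne'.isUnit, one_mulVec]
  have ht0 : 0 ≤ x ⬝ᵥ y := psd_dot hM.inv.posSemidef x
  have hyy : y ⬝ᵥ y ≤ x ⬝ᵥ y := by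
    have := psd_dot h1 y
    rw [sub_mulVec, dotProduct_sub, one_mulVec, sub_nonneg] at this
    calc y ⬝ᵥ y ≤ y ⬝ᵥ (M *ᵥ y) := this
    _ = x ⬝ᵥ y := by rw [hxy, dotProduct_comm]
  have hcs : (x ⬝ᵥ y) ^ 2 ≤ (x ⬝ᵥ x) * (y ⬝ᵥ y) := by
    have := Finset.sum_mul_sq_le_sq_mul_sq Finset.univ x y
    simpa [dotProduct, pow_two, mul_assoc, mul_comm, mul_left_comm] using this
  rcases eq_or_lt_of_le ht0 with h | h
  · rw [← h]; exact dot_self_nonneg x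
  · have h2 : (x ⬝ᵥ y) * (x ⬝ᵥ y) ≤ (x ⬝ᵥ x) * (x ⬝ᵥ y) := by
      calc (x ⬝ᵥ y) * (x ⬝ᵥ y) = (x ⬝ᵥ y) ^ 2 := (pow_two _).symm
      _ ≤ (x ⬝ᵥ x) * (y ⬝ᵥ y) := hcs
      _ ≤ (x ⬝ᵥ x) * (x ⬝ᵥ y) := mul_le_mul_of_nonneg_left hyy (dot_self_nonneg x)
    exact le_of_mul_le_mul_right h2 h

/-- matrix determinant lemma -/
lemma det_add_vecMulVec {M : Matrix (Fin d) (Fin d) ℝ} (hM : M.PosDef) (v : Fin d → ℝ) :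
    (M + vecMulVec v v).det = M.det * (1 + v ⬝ᵥ (M⁻¹ *ᵥ v)) := by
  rw [vecMulVec_eq (Fin 1), Matrix.det_add_mul _ _ hM.det_pos.ne'.isUnit]
  congr 1
  rw [Matrix.det_unique]
  simp only [Matrix.add_apply, Matrix.one_apply_eq, Matrix.mul_apply, Matrix.replicateRow_apply,
    Matrix.replicateCol_apply, Matrix.mulVec, dotProduct, Finset.mul_sum, Finset.sum_mul]
  congr 1
  rw [Finset.sum_comm]
  exact Finset.sum_congr rfl fun i _ => Finset.sum_congr rfl fun j _ => by ring

lemma posDef_submatrix_equiv {n m : Type*} [Fintype n] [DecidableEq n] [Fintype m]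
    [DecidableEq m] {M : Matrix n n ℝ} (hM : M.PosDef) (e : m ≃ n) :
    (M.submatrix e e).PosDef := by
  refine Matrix.PosDef.of_dotProduct_mulVec_pos (hM.1.submatrix e) fun x hx => ?_
  rw [submatrix_mulVec_equiv]
  have : star x ⬝ᵥ ((M *ᵥ (x ∘ e.symm)) ∘ e) = star (x ∘ e.symm) ⬝ᵥ (M *ᵥ (x ∘ e.symm)) := by
    simp only [dotProduct, Pi.star_apply, Function.comp_apply]
    exact Fintype.sum_equiv e _ _ fun i => by simp
  rw [this]
  refine hM.dotProduct_mulVec_pos fun h => hx ?_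
  funext i
  have := congrFun h (e i)
  simpa using this

lemma psd_dot' {n : Type*} [Fintype n] {M : Matrix n n ℝ} (hM : M.PosSemidef) (x : n → ℝ) :
    0 ≤ x ⬝ᵥ (M *ᵥ x) := by simpa using hM.dotProduct_mulVec_nonneg x

lemma posDef_toBlocks₁₁ {α β : Type*} [Fintype α] [DecidableEq α] [Fintype β] [DecidableEq β]
    {M : Matrix (α ⊕ β) (α ⊕ β) ℝ} (hM : M.PosDef) : M.toBlocks₁₁.PosDef := by
  refine Matrix.PosDef.of_dotProduct_mulVec_pos ?_ fun x hx => ?_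
  · have := hM.1
    unfold Matrix.IsHermitian at this ⊢
    ext i j
    have := congrFun (congrFun this (Sum.inl i)) (Sum.inl j)
    simpa [toBlocks₁₁, Matrix.conjTranspose_apply] using this
  · have hy : (Sum.elim x 0 : α ⊕ β → ℝ) ≠ 0 := by
      intro h
      exact hx (funext fun i => by simpa using congrFun h (Sum.inl i))
    have := hM.dotProduct_mulVec_pos hy
    have heq : star (Sum.elim x 0) ⬝ᵥ (M *ᵥ Sum.elim x 0)
        = star x ⬝ᵥ (M.toBlocks₁₁ *ᵥ x) := by
      simp only [dotProduct, Matrix.mulVec, Fintype.sum_sum_type, Sum.elim_inl,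
        Sum.elim_inr, Pi.star_apply, Pi.zero_apply, star_zero, zero_mul, toBlocks₁₁,
        Matrix.of_apply]
      simp [dotProduct]
    rwa [heq] at this

/-- Hadamard's inequality for positive definite real matrices. -/
lemma hadamard_ineq : ∀ {m : ℕ} {A : Matrix (Fin m) (Fin m) ℝ}, A.PosDef →
    A.det ≤ ∏ i, A i i := by
  intro m
  induction m with
  | zero => intro A _; simp [Matrix.det_isEmpty]
  | succ m ih =>
    intro A hA
    set e : Fin m ⊕ Fin 1 ≃ Fin (m + 1) := finSumFinEquiv
    set A' := A.submatrix e e with hA'def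
    have hA' : A'.PosDef := posDef_submatrix_equiv hA e
    have hdet : A'.det = A.det := Matrix.det_submatrix_equiv_self e A
    have hprod : (∏ i, A' i i) = ∏ i, A i i := by
      rw [hA'def]
      exact Equiv.prod_comp e (fun j => A j j)
    set A₁ := A'.toBlocks₁₁ with hA₁
    have hA₁pd : A₁.PosDef := posDef_toBlocks₁₁ hA'
    have : Invertible A₁ := A₁.invertibleOfIsUnitDet hA₁pd.det_pos.ne'.isUnit
    have hblocks : A' = fromBlocks A₁ A'.toBlocks₁₂ A'.toBlocks₂₁ A'.toBlocks₂₂ :=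
      (fromBlocks_toBlocks A').symm
    have hdet2 : A'.det = A₁.det * (A'.toBlocks₂₂ - A'.toBlocks₂₁ * ⅟A₁ * A'.toBlocks₁₂).det := by
      conv_lhs => rw [hblocks]
      exact Matrix.det_fromBlocks₁₁ _ _ _ _
    set S := A'.toBlocks₂₂ - A'.toBlocks₂₁ * ⅟A₁ * A'.toBlocks₁₂ with hS
    have hSdet : S.det = S 0 0 := Matrix.det_unique S
    set u : Fin m → ℝ := fun j => A' (Sum.inl j) (Sum.inr 0) with hu
    have hsym : ∀ j, A' (Sum.inr 0) (Sum.inl j) = A' (Sum.inl j) (Sum.inr 0) := by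
      intro j
      have := congrFun (congrFun hA'.1 (Sum.inr 0)) (Sum.inl j)
      simpa [Matrix.conjTranspose_apply] using this.symm
    have hs : (A'.toBlocks₂₁ * ⅟A₁ * A'.toBlocks₁₂) 0 0 = u ⬝ᵥ (A₁⁻¹ *ᵥ u) := by
      rw [invOf_eq_nonsing_inv]
      simp only [Matrix.mul_apply, Matrix.mulVec, dotProduct, toBlocks₂₁, toBlocks₁₂,
        Matrix.of_apply, Finset.sum_mul, Finset.mul_sum]
      rw [Finset.sum_comm]
      refine Finset.sum_congr rfl fun i _ => Finset.sum_congr rfl fun j _ => ?_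
      rw [hsym]
      ring
    have hs0 : 0 ≤ (A'.toBlocks₂₁ * ⅟A₁ * A'.toBlocks₁₂) 0 0 := by
      rw [hs]
      exact psd_dot' hA₁pd.inv.posSemidef u
    have hD0 : S 0 0 ≤ A'.toBlocks₂₂ 0 0 := by
      rw [hS]
      simp only [Matrix.sub_apply]
      linarith
    have hSpos : 0 < S 0 0 := by
      have h1 : 0 < A'.det := hA'.det_pos
      have h2 : 0 < A₁.det := hA₁pd.det_pos
      rw [hdet2, hSdet] at h1
      nlinarith
    have hdiag : (∏ i, A' i i) = (∏ j : Fin m, A₁ j j) * A'.toBlocks₂₂ 0 0 := by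
      rw [Fintype.prod_sum_type (fun i => A' i i), Fin.prod_univ_one]
      rfl
    have ihA₁ : A₁.det ≤ ∏ j, A₁ j j := ih hA₁pd
    calc A.det = A₁.det * S 0 0 := by rw [← hdet, hdet2, hSdet]
    _ ≤ A₁.det * A'.toBlocks₂₂ 0 0 := mul_le_mul_of_nonneg_left hD0 hA₁pd.det_pos.le
    _ ≤ (∏ j, A₁ j j) * A'.toBlocks₂₂ 0 0 := by
        refine mul_le_mul_of_nonneg_right ihA₁ ?_
        have : 0 < A'.toBlocks₂₂ 0 0 := lt_of_lt_of_le hSpos hD0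
        linarith
    _ = ∏ i, A i i := by rw [← hdiag, hprod]

/-- s ≤ 2 log(1+s) for 0 ≤ s ≤ 1 -/
lemma le_two_log {s : ℝ} (h0 : 0 ≤ s) (h1 : s ≤ 1) : s ≤ 2 * Real.log (1 + s) := by
  have hpos : (0:ℝ) < 1 + s := by linarith
  have hlog0 := Real.log_le_sub_one_of_pos (x := (1 + s)⁻¹) (by positivity)
  rw [Real.log_inv] at hlog0
  have hlog : s / (1 + s) ≤ Real.log (1 + s) := by
    have heq : (1 + s)⁻¹ - 1 = -(s / (1+s)) := by field_simp; ring
    linarith [heq ▸ hlog0]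
  have h2 : s / 2 ≤ s / (1 + s) :=
    div_le_div_of_nonneg_left h0 hpos (by linarith)
  linarith

/-- AM-GM style bound -/
lemma prod_add_le {ι : Type*} {s : Finset ι} (hs : s.Nonempty) {c t : ℝ} (hc : 0 < c)
    (m : ι → ℝ) (hm : ∀ i ∈ s, 0 ≤ m i) (ht : ∑ i ∈ s, m i ≤ t) :
    ∏ i ∈ s, (c + m i) ≤ (c + t / s.card) ^ (s.card : ℕ) := by
  set k : ℕ := s.card with hk
  have hk0 : 0 < (k : ℝ) := by
    have := Finset.card_pos.mpr hs
    exact_mod_cast this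
  have hz : ∀ i ∈ s, (0:ℝ) ≤ c + m i := fun i hi => by linarith [hm i hi]
  have hgm := Real.geom_mean_le_arith_mean_weighted s (fun _ => 1 / (k:ℝ))
    (fun i => c + m i) (fun i _ => by positivity)
    (by rw [Finset.sum_const, nsmul_eq_mul, ← hk]; field_simp [hk0.ne']) hz
  have hsum : ∑ i ∈ s, (1/(k:ℝ)) * (c + m i) ≤ c + t / k := by
    rw [← Finset.mul_sum, Finset.sum_add_distrib, Finset.sum_const, nsmul_eq_mul, mul_add]
    have hck : (1/(k:ℝ)) * ((k:ℝ) * c) = c := by field_simp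
    have h2 : (1/(k:ℝ)) * (∑ i ∈ s, m i) ≤ t / k := by
      rw [div_eq_inv_mul t, one_div]
      exact mul_le_mul_of_nonneg_left ht (by positivity)
    rw [hck]
    linarith
  have hprod : ∏ i ∈ s, (c + m i) ^ (1/(k:ℝ)) = (∏ i ∈ s, (c + m i)) ^ (1/(k:ℝ)) :=
    Real.finset_prod_rpow s _ hz _
  rw [hprod] at hgm
  have hP0 : 0 ≤ ∏ i ∈ s, (c + m i) := Finset.prod_nonneg hz
  have hres : ∏ i ∈ s, (c + m i) = ((∏ i ∈ s, (c + m i)) ^ (1/(k:ℝ))) ^ (k:ℝ) := by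
    rw [← Real.rpow_mul hP0]
    rw [one_div, inv_mul_cancel₀ hk0.ne', Real.rpow_one]
  calc ∏ i ∈ s, (c + m i) = ((∏ i ∈ s, (c + m i)) ^ (1/(k:ℝ))) ^ (k:ℝ) := hres
  _ ≤ (c + t/(k:ℝ)) ^ (k:ℝ) :=
      Real.rpow_le_rpow (Real.rpow_nonneg hP0 _) (le_trans hgm hsum) hk0.le
  _ = (c + t/(k:ℝ)) ^ (k:ℕ) := Real.rpow_natCast _ k

end ProjUCB

namespace ProjUCB

lemma posDef_conj' {u M : Matrix (Fin d) (Fin d) ℝ} (hM : M.PosDef)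
    (h1 : star u * u = 1) : (star u * M * u).PosDef := by
  rw [Matrix.star_eq_conjTranspose]
  refine Matrix.PosDef.of_dotProduct_mulVec_pos ?_ fun x hx => ?_
  · unfold Matrix.IsHermitian
    rw [conjTranspose_mul, conjTranspose_mul, conjTranspose_conjTranspose, hM.1.eq,
      Matrix.mul_assoc]
  · have hx' : u *ᵥ x ≠ 0 := by
      intro h
      apply hx
      have hxx : (star u * u) *ᵥ x = star u *ᵥ (u *ᵥ x) := (mulVec_mulVec _ _ _).symm
      rw [h1, one_mulVec, h, mulVec_zero] at hxx
      exact hxx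
    simpa only [star_mulVec, dotProduct_mulVec, vecMul_vecMul] using hM.dotProduct_mulVec_pos hx'

lemma det_conj' {u M : Matrix (Fin d) (Fin d) ℝ} (h1 : star u * u = 1) :
    (star u * M * u).det = M.det := by
  have hdu : (star u).det * u.det = 1 := by rw [← det_mul, h1, det_one]
  rw [det_mul, det_mul]
  calc (star u).det * M.det * u.det = M.det * ((star u).det * u.det) := by ring
  _ = M.det := by rw [hdu, mul_one]

end ProjUCB

open ProjUCB Matrix

set_option maxHeartbeats 1000000 in
/-- Deterministic core of Theorem 1: cumulative pseudo-regret of projected LinUCB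
is at most 2γ·√(2n·S_n^{λ₁,λ₂}). -/
theorem projected_linucb_regret {ι : Type*} (d p n : ℕ) (hp1 : 1 ≤ p) (hpd : p ≤ d - 1)
    (P : Matrix (Fin d) (Fin d) ℝ) (hsymm : Pᵀ = P) (hidem : P * P = P)
    (hrank : P.rank = p)
    (l1 l2 : ℝ) (hl1 : 1 ≤ l1) (hl2 : 1 ≤ l2)
    (γ : ℝ) (hγ : 0 ≤ γ) (θstar : Fin d → ℝ)
    (A : ℕ → Finset ι) (hA : ∀ k, (A k).Nonempty)
    (x : ι → Fin d → ℝ)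
    (hxnorm : ∀ k ∈ Finset.range n, ∀ b ∈ A (k + 1), Real.sqrt (x b ⬝ᵥ x b) ≤ 1)
    (a : ℕ → ι) (ha : ∀ k ∈ Finset.range n, a (k + 1) ∈ A (k + 1))
    (B : ℕ → Matrix (Fin d) (Fin d) ℝ)
    (hB0 : B 0 = l1 • ((1 : Matrix (Fin d) (Fin d) ℝ) - P) + l2 • P)
    (hBs : ∀ k : ℕ, B (k + 1) = B k + vecMulVec (x (a (k + 1))) (x (a (k + 1))))
    (θhat : ℕ → Fin d → ℝ)
    (hconf : ∀ k ∈ Finset.range n, ∀ b ∈ A (k + 1),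
      |x b ⬝ᵥ (θhat k - θstar)| ≤ γ * Real.sqrt (x b ⬝ᵥ ((B k)⁻¹ *ᵥ x b)))
    (hucb : ∀ k ∈ Finset.range n, ∀ b ∈ A (k + 1),
      x b ⬝ᵥ θhat k + γ * Real.sqrt (x b ⬝ᵥ ((B k)⁻¹ *ᵥ x b))
        ≤ x (a (k + 1)) ⬝ᵥ θhat k
          + γ * Real.sqrt (x (a (k + 1)) ⬝ᵥ ((B k)⁻¹ *ᵥ x (a (k + 1)))))
    (astar : ℕ → ι)
    (hastar : ∀ k ∈ Finset.range n, astar (k + 1) ∈ A (k + 1))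
    (hopt : ∀ k ∈ Finset.range n, ∀ b ∈ A (k + 1),
      x b ⬝ᵥ θstar ≤ x (astar (k + 1)) ⬝ᵥ θstar) :
    ∑ k ∈ Finset.range n, (x (astar (k + 1)) - x (a (k + 1))) ⬝ᵥ θstar
      ≤ 2 * γ * Real.sqrt (2 * (n : ℝ)
          * ((p : ℝ) * Real.log (1 + (n : ℝ) / ((p : ℝ) * l2))
            + ((d - p : ℕ) : ℝ) * Real.log (1 + (n : ℝ) / (((d - p : ℕ) : ℝ) * l1)))) := by
  classical
  have hd2 : p + 1 ≤ d := by omega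
  -- P is hermitian
  have hherm : P.IsHermitian := by
    show Pᴴ = P
    ext i j
    rw [Matrix.conjTranspose_apply]
    have h := congrFun (congrFun hsymm i) j
    rw [Matrix.transpose_apply] at h
    simpa using h
  -- PSD of P and 1-P
  have hPpsd : P.PosSemidef := by
    have h : Pᴴ * P = P := by rw [hherm.eq, hidem]
    exact h ▸ posSemidef_conjTranspose_mul_self P
  have hQherm : ((1 : Matrix (Fin d) (Fin d) ℝ) - P).IsHermitian := by
    show _ᴴ = _
    rw [conjTranspose_sub, conjTranspose_one, hherm.eq]
  have hQidem : ((1 : Matrix (Fin d) (Fin d) ℝ) - P) * ((1 : Matrix (Fin d) (Fin d) ℝ) - P)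
      = (1 : Matrix (Fin d) (Fin d) ℝ) - P := by
    simp only [Matrix.sub_mul, Matrix.mul_sub, Matrix.one_mul, Matrix.mul_one, hidem]
    abel
  have hQpsd : ((1 : Matrix (Fin d) (Fin d) ℝ) - P).PosSemidef := by
    have h : ((1 : Matrix (Fin d) (Fin d) ℝ) - P)ᴴ * ((1 : Matrix (Fin d) (Fin d) ℝ) - P)
        = (1 : Matrix (Fin d) (Fin d) ℝ) - P := by rw [hQherm.eq, hQidem]
    exact h ▸ posSemidef_conjTranspose_mul_self _
  -- rank-one updates are PSD
  have hvv : ∀ v : Fin d → ℝ, (vecMulVec v v).PosSemidef := by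
    intro v
    refine Matrix.PosSemidef.of_dotProduct_mulVec_nonneg ?_ fun y => ?_
    · show _ᴴ = _
      ext i j
      simp [Matrix.conjTranspose_apply, Matrix.vecMulVec_apply, mul_comm]
    · have hy : star y ⬝ᵥ (vecMulVec v v *ᵥ y) = (v ⬝ᵥ y) * (v ⬝ᵥ y) := by
        simp only [Matrix.mulVec, dotProduct, Matrix.vecMulVec_apply, Pi.star_apply,
          star_trivial, Finset.mul_sum, Finset.sum_mul]
        exact Finset.sum_congr rfl fun i _ => Finset.sum_congr rfl fun j _ => by ring
      rw [hy]
      exact mul_self_nonneg _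
  -- B k dominates the identity, and B k - B 0 is PSD
  have hB0m1 : (B 0 - 1).PosSemidef := by
    have heq : B 0 - 1 = (l1 - 1) • ((1 : Matrix (Fin d) (Fin d) ℝ) - P) + (l2 - 1) • P := by
      rw [hB0]; module
    rw [heq]
    exact (smul_posSemidef (by linarith) hQpsd).add (smul_posSemidef (by linarith) hPpsd)
  have hmain : ∀ k : ℕ, (B k - 1).PosSemidef ∧ (B k - B 0).PosSemidef := by
    intro k
    induction k with
    | zero => exact ⟨hB0m1, by simpa using (Matrix.PosSemidef.zero (n := Fin d) (R := ℝ))⟩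
    | succ k ihk =>
      have h1 : B (k+1) - 1 = (B k - 1) + vecMulVec (x (a (k+1))) (x (a (k+1))) := by
        rw [hBs k]; abel
      have h2 : B (k+1) - B 0 = (B k - B 0) + vecMulVec (x (a (k+1))) (x (a (k+1))) := by
        rw [hBs k]; abel
      exact ⟨h1 ▸ ihk.1.add (hvv _), h2 ▸ ihk.2.add (hvv _)⟩
  have hBpd : ∀ k, (B k).PosDef := by
    intro k
    have h : B k = (B k - 1) + 1 := by abel
    rw [h]
    exact Matrix.PosDef.posSemidef_add (hmain k).1 Matrix.PosDef.one
  -- the elliptical quantities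
  set v : ℕ → ℝ := fun k => x (a (k+1)) ⬝ᵥ ((B k)⁻¹ *ᵥ x (a (k+1))) with hvdef
  have hv0 : ∀ k, 0 ≤ v k := fun k => psd_dot (hBpd k).inv.posSemidef _
  have hx1 : ∀ k ∈ Finset.range n, x (a (k+1)) ⬝ᵥ x (a (k+1)) ≤ 1 := by
    intro k hk
    have h := hxnorm k hk _ (ha k hk)
    have h0 := dot_self_nonneg (x (a (k+1)))
    nlinarith [Real.sq_sqrt h0, Real.sqrt_nonneg (x (a (k+1)) ⬝ᵥ x (a (k+1)))]
  have hv1 : ∀ k ∈ Finset.range n, v k ≤ 1 := fun k hk =>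
    le_trans (inv_quad_le (hBpd k) (hmain k).1 _) (hx1 k hk)
  -- per-round regret bound
  have hreg : ∀ k ∈ Finset.range n,
      (x (astar (k+1)) - x (a (k+1))) ⬝ᵥ θstar ≤ 2 * γ * Real.sqrt (v k) := by
    intro k hk
    have h1 := hconf k hk _ (hastar k hk)
    have h2 := hconf k hk _ (ha k hk)
    have h3 : x (astar (k+1)) ⬝ᵥ θhat k
          + γ * Real.sqrt (x (astar (k+1)) ⬝ᵥ ((B k)⁻¹ *ᵥ x (astar (k+1))))
        ≤ x (a (k+1)) ⬝ᵥ θhat k + γ * Real.sqrt (v k) := hucb k hk _ (hastar k hk)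
    rw [abs_le] at h1 h2
    rw [dotProduct_sub] at h1 h2
    rw [sub_dotProduct]
    have h2' : x (a (k+1)) ⬝ᵥ (θhat k) - x (a (k+1)) ⬝ᵥ θstar ≤ γ * Real.sqrt (v k) := h2.2
    linarith [h1.1, h1.2, h3]
  -- determinant telescoping
  have hdetstep : ∀ k, (B (k+1)).det = (B k).det * (1 + v k) := by
    intro k
    rw [hBs k]
    exact det_add_vecMulVec (hBpd k) _
  have htel : ∀ N : ℕ, Real.log ((B N).det) - Real.log ((B 0).det)
      = ∑ k ∈ Finset.range N, Real.log (1 + v k) := by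
    intro N
    induction N with
    | zero => simp
    | succ N ihN =>
      have hpos : (0:ℝ) < 1 + v N := by linarith [hv0 N]
      rw [Finset.sum_range_succ, ← ihN, hdetstep N,
        Real.log_mul (hBpd N).det_pos.ne' hpos.ne']
      ring
  have hsumv : ∑ k ∈ Finset.range n, v k
      ≤ 2 * (Real.log ((B n).det) - Real.log ((B 0).det)) := by
    rw [htel n, Finset.mul_sum]
    exact Finset.sum_le_sum fun k hk => le_two_log (hv0 k) (hv1 k hk)
  -- spectral decomposition of P
  set u : Matrix (Fin d) (Fin d) ℝ := (hherm.eigenvectorUnitary : Matrix (Fin d) (Fin d) ℝ)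
    with hudef
  set μ : Fin d → ℝ := hherm.eigenvalues with hμdef
  have h1 : star u * u = 1 := Matrix.mem_unitaryGroup_iff'.mp hherm.eigenvectorUnitary.2
  have h2 : u * star u = 1 := Matrix.mem_unitaryGroup_iff.mp hherm.eigenvectorUnitary.2
  have hspec : star u * P * u = Matrix.diagonal μ := by
    have h := hherm.conjStarAlgAut_star_eigenvectorUnitary
    simpa [Unitary.conjStarAlgAut_star_apply, RCLike.ofReal_real_eq_id] using h
  have hmu01 : ∀ i, μ i = 0 ∨ μ i = 1 := by
    have hDD : Matrix.diagonal μ * Matrix.diagonal μ = Matrix.diagonal μ := by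
      rw [← hspec]
      calc (star u * P * u) * (star u * P * u)
          = star u * (P * ((u * star u) * (P * u))) := by simp only [Matrix.mul_assoc]
      _ = star u * (P * (P * u)) := by rw [h2, Matrix.one_mul]
      _ = star u * ((P * P) * u) := by rw [Matrix.mul_assoc]
      _ = star u * (P * u) := by rw [hidem]
      _ = star u * P * u := by rw [Matrix.mul_assoc]
    intro i
    have h := congrFun (congrFun hDD i) i
    rw [Matrix.diagonal_mul_diagonal] at h
    have h' : μ i * μ i = μ i := by simpa using h
    have hz : μ i * (μ i - 1) = 0 := by linear_combination h'
    rcases mul_eq_zero.mp hz with h0 | h0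
    · exact Or.inl h0
    · exact Or.inr (by linarith [sub_eq_zero.mp h0])
  set S : Finset (Fin d) := Finset.univ.filter (fun i => μ i ≠ 0) with hSdef
  have hScard : S.card = p := by
    have h := hherm.rank_eq_card_non_zero_eigs
    rw [hrank, Fintype.card_subtype] at h
    exact h.symm
  have hSccard : Sᶜ.card = d - p := by
    rw [Finset.card_compl, hScard]
    simp
  set c : Fin d → ℝ := fun i => l1 * (1 - μ i) + l2 * μ i with hcdef
  have hcS : ∀ i ∈ S, c i = l2 := by
    intro i hi
    have hne : μ i ≠ 0 := (Finset.mem_filter.mp hi).2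
    rcases hmu01 i with h0 | h0
    · exact absurd h0 hne
    · simp [hcdef, h0]
  have hcSc : ∀ i ∈ Sᶜ, c i = l1 := by
    intro i hi
    have h0 : μ i = 0 := by
      have := Finset.mem_compl.mp hi
      by_contra hne
      exact this (Finset.mem_filter.mpr ⟨Finset.mem_univ i, hne⟩)
    simp [hcdef, h0]
  have hcpos : ∀ i, 0 < c i := by
    intro i
    rcases hmu01 i with h0 | h0 <;> simp [hcdef, h0] <;> linarith
  have hB0diag : star u * B 0 * u = Matrix.diagonal c := by
    have hQ : star u * ((1 : Matrix (Fin d) (Fin d) ℝ) - P) * u = 1 - Matrix.diagonal μ := by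
      rw [Matrix.mul_sub, Matrix.mul_one, Matrix.sub_mul, h1, hspec]
    rw [hB0, Matrix.mul_add, Matrix.add_mul, Matrix.mul_smul, Matrix.smul_mul,
      Matrix.mul_smul, Matrix.smul_mul, hQ, hspec]
    ext i j
    by_cases hij : i = j
    · subst hij
      simp [Matrix.add_apply, Matrix.sub_apply, Matrix.smul_apply, Matrix.diagonal_apply_eq,
        Matrix.one_apply_eq, hcdef]
    · simp [Matrix.add_apply, Matrix.sub_apply, Matrix.smul_apply,
        Matrix.diagonal_apply_ne _ hij, Matrix.one_apply_ne hij]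
  have hdetB0 : (B 0).det = ∏ i, c i := by
    have h := det_conj' (M := B 0) h1
    rw [hB0diag] at h
    rw [← h, Matrix.det_diagonal]
  -- the conjugated Gram increment
  set M : Matrix (Fin d) (Fin d) ℝ := star u * (B n - B 0) * u with hMdef
  have hMpsd : M.PosSemidef := by
    have hX : (B n - B 0).PosSemidef := (hmain n).2
    have h := hX.conjTranspose_mul_mul_same u
    rw [← Matrix.star_eq_conjTranspose] at h
    exact h
  have hMdiag : ∀ i, 0 ≤ M i i := psd_diag_nonneg hMpsd
  have htraceM : M.trace ≤ (n:ℝ) := by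
    have heq : M.trace = (B n - B 0).trace := by
      rw [hMdef, Matrix.trace_mul_cycle, h2, Matrix.one_mul]
    have htr : ∀ N : ℕ, N ≤ n → (B N - B 0).trace ≤ (N:ℝ) := by
      intro N
      induction N with
      | zero => intro _; simp
      | succ N ihN =>
        intro hNn
        have hxN := hx1 N (Finset.mem_range.mpr (by omega))
        have heq2 : B (N+1) - B 0 = (B N - B 0) + vecMulVec (x (a (N+1))) (x (a (N+1))) := by
          rw [hBs N]; abel
        rw [heq2, Matrix.trace_add]
        have htrv : (vecMulVec (x (a (N+1))) (x (a (N+1)))).trace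
            = x (a (N+1)) ⬝ᵥ x (a (N+1)) := by
          simp [Matrix.trace, Matrix.diag, Matrix.vecMulVec_apply, dotProduct]
        rw [htrv]
        have := ihN (by omega)
        push_cast
        linarith
    rw [heq]
    exact htr n le_rfl
  set C : Matrix (Fin d) (Fin d) ℝ := Matrix.diagonal c + M with hCdef
  have hCB : star u * B n * u = C := by
    have h : B n = B 0 + (B n - B 0) := by abel
    rw [hCdef, hMdef, ← hB0diag]
    conv_lhs => rw [h]
    rw [Matrix.mul_add, Matrix.add_mul]
  have hCpd : C.PosDef := by
    rw [← hCB]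
    exact posDef_conj' (hBpd n) h1
  have hdetC : (B n).det = C.det := by
    rw [← hCB]
    exact (det_conj' h1).symm
  have hHad : C.det ≤ ∏ i, (c i + M i i) := by
    refine le_trans (hadamard_ineq hCpd) (le_of_eq (Finset.prod_congr rfl fun i _ => ?_))
    rw [hCdef]
    simp [Matrix.add_apply, Matrix.diagonal_apply_eq]
  have hsplit : ∏ i, (c i + M i i)
      = (∏ i ∈ S, (l2 + M i i)) * (∏ i ∈ Sᶜ, (l1 + M i i)) := by
    rw [← Finset.prod_mul_prod_compl S]
    congr 1
    · exact Finset.prod_congr rfl fun i hi => by rw [hcS i hi]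
    · exact Finset.prod_congr rfl fun i hi => by rw [hcSc i hi]
  have hMsum : ∀ T : Finset (Fin d), ∑ i ∈ T, M i i ≤ (n:ℝ) := by
    intro T
    calc ∑ i ∈ T, M i i ≤ ∑ i, M i i :=
        Finset.sum_le_sum_of_subset_of_nonneg (Finset.subset_univ T) fun i _ _ => hMdiag i
    _ = M.trace := by simp [Matrix.trace, Matrix.diag]
    _ ≤ (n:ℝ) := htraceM
  have hSne : S.Nonempty := Finset.card_pos.mp (by rw [hScard]; omega)
  have hScne : Sᶜ.Nonempty := Finset.card_pos.mp (by rw [hSccard]; omega)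
  have hl2p : (0:ℝ) < l2 := by linarith
  have hl1p : (0:ℝ) < l1 := by linarith
  have hb1 : ∏ i ∈ S, (l2 + M i i) ≤ (l2 + (n:ℝ) / p) ^ p := by
    have h := prod_add_le hSne hl2p (fun i => M i i) (fun i _ => hMdiag i) (hMsum S)
    rwa [hScard] at h
  have hb2 : ∏ i ∈ Sᶜ, (l1 + M i i) ≤ (l1 + (n:ℝ) / ((d - p : ℕ):ℝ)) ^ (d - p : ℕ) := by
    have h := prod_add_le hScne hl1p (fun i => M i i) (fun i _ => hMdiag i) (hMsum Sᶜ)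
    rwa [hSccard] at h
  have hp0 : (0:ℝ) < (p:ℝ) := by exact_mod_cast hp1
  have hq0 : (0:ℝ) < ((d - p : ℕ):ℝ) := by
    have : 1 ≤ d - p := by omega
    exact_mod_cast this
  have hA2 : (0:ℝ) < l2 + (n:ℝ)/p := by positivity
  have hA1 : (0:ℝ) < l1 + (n:ℝ)/((d - p : ℕ):ℝ) := by positivity
  have hdetBn_le : (B n).det
      ≤ (l2 + (n:ℝ)/p) ^ p * (l1 + (n:ℝ)/((d - p : ℕ):ℝ)) ^ (d - p : ℕ) := by
    rw [hdetC]
    calc C.det ≤ ∏ i, (c i + M i i) := hHad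
    _ = (∏ i ∈ S, (l2 + M i i)) * (∏ i ∈ Sᶜ, (l1 + M i i)) := hsplit
    _ ≤ (l2 + (n:ℝ)/p) ^ p * (l1 + (n:ℝ)/((d - p : ℕ):ℝ)) ^ (d - p : ℕ) := by
        refine mul_le_mul hb1 hb2 (Finset.prod_nonneg fun i _ => by linarith [hMdiag i])
          (by positivity)
  have hlogBn : Real.log ((B n).det)
      ≤ (p:ℝ) * Real.log (l2 + (n:ℝ)/p)
        + ((d - p : ℕ):ℝ) * Real.log (l1 + (n:ℝ)/((d - p : ℕ):ℝ)) := by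
    calc Real.log ((B n).det)
        ≤ Real.log ((l2 + (n:ℝ)/p) ^ p * (l1 + (n:ℝ)/((d - p : ℕ):ℝ)) ^ (d - p : ℕ)) :=
          Real.log_le_log (hBpd n).det_pos hdetBn_le
    _ = (p:ℝ) * Real.log (l2 + (n:ℝ)/p)
        + ((d - p : ℕ):ℝ) * Real.log (l1 + (n:ℝ)/((d - p : ℕ):ℝ)) := by
        rw [Real.log_mul (by positivity) (by positivity), Real.log_pow, Real.log_pow]
  have hlogB0 : Real.log ((B 0).det) = (p:ℝ) * Real.log l2 + ((d - p : ℕ):ℝ) * Real.log l1 := by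
    rw [hdetB0, Real.log_prod fun i _ => (hcpos i).ne', ← Finset.sum_add_sum_compl S]
    congr 1
    · rw [Finset.sum_congr rfl fun i hi => by rw [hcS i hi], Finset.sum_const, hScard,
        nsmul_eq_mul]
    · rw [Finset.sum_congr rfl fun i hi => by rw [hcSc i hi], Finset.sum_const, hSccard,
        nsmul_eq_mul]
  have e2 : Real.log (l2 + (n:ℝ)/p) - Real.log l2 = Real.log (1 + (n:ℝ)/((p:ℝ)*l2)) := by
    rw [← Real.log_div hA2.ne' hl2p.ne']
    congr 1
    field_simp
  have e1 : Real.log (l1 + (n:ℝ)/((d - p : ℕ):ℝ)) - Real.log l1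
      = Real.log (1 + (n:ℝ)/(((d - p : ℕ):ℝ)*l1)) := by
    rw [← Real.log_div hA1.ne' hl1p.ne']
    congr 1
    field_simp
  set Sn : ℝ := (p:ℝ) * Real.log (1 + (n:ℝ)/((p:ℝ)*l2))
    + ((d - p : ℕ):ℝ) * Real.log (1 + (n:ℝ)/(((d - p : ℕ):ℝ)*l1)) with hSn'
  have hSnb : Real.log ((B n).det) - Real.log ((B 0).det) ≤ Sn := by
    calc Real.log ((B n).det) - Real.log ((B 0).det)
        ≤ ((p:ℝ) * Real.log (l2 + (n:ℝ)/p)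
            + ((d - p : ℕ):ℝ) * Real.log (l1 + (n:ℝ)/((d - p : ℕ):ℝ)))
          - ((p:ℝ) * Real.log l2 + ((d - p : ℕ):ℝ) * Real.log l1) := by
          rw [hlogB0]
          linarith [hlogBn]
    _ = (p:ℝ) * (Real.log (l2 + (n:ℝ)/p) - Real.log l2)
        + ((d - p : ℕ):ℝ) * (Real.log (l1 + (n:ℝ)/((d - p : ℕ):ℝ)) - Real.log l1) := by ring
    _ = Sn := by rw [e2, e1]
  have hsumv2 : ∑ k ∈ Finset.range n, v k ≤ 2 * Sn := by
    calc ∑ k ∈ Finset.range n, v k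
        ≤ 2 * (Real.log ((B n).det) - Real.log ((B 0).det)) := hsumv
    _ ≤ 2 * Sn := by linarith [hSnb]
  -- Cauchy-Schwarz aggregation
  have hsum_sqrt : ∑ k ∈ Finset.range n, Real.sqrt (v k)
      ≤ Real.sqrt ((n:ℝ) * ∑ k ∈ Finset.range n, v k) := by
    have hnn : 0 ≤ ∑ k ∈ Finset.range n, Real.sqrt (v k) :=
      Finset.sum_nonneg fun k _ => Real.sqrt_nonneg _
    have hy : 0 ≤ (n:ℝ) * ∑ k ∈ Finset.range n, v k :=
      mul_nonneg (Nat.cast_nonneg n) (Finset.sum_nonneg fun k _ => hv0 k)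
    rw [Real.le_sqrt hnn hy]
    calc (∑ k ∈ Finset.range n, Real.sqrt (v k)) ^ 2
        = (∑ k ∈ Finset.range n, 1 * Real.sqrt (v k)) ^ 2 := by simp
    _ ≤ (∑ k ∈ Finset.range n, (1:ℝ)^2) * (∑ k ∈ Finset.range n, Real.sqrt (v k) ^ 2) :=
        Finset.sum_mul_sq_le_sq_mul_sq _ _ _
    _ = (n:ℝ) * ∑ k ∈ Finset.range n, v k := by
        rw [Finset.sum_congr rfl fun k _ => Real.sq_sqrt (hv0 k)]
        simp
  calc ∑ k ∈ Finset.range n, (x (astar (k + 1)) - x (a (k + 1))) ⬝ᵥ θstar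
      ≤ ∑ k ∈ Finset.range n, 2 * γ * Real.sqrt (v k) := Finset.sum_le_sum hreg
  _ = 2 * γ * ∑ k ∈ Finset.range n, Real.sqrt (v k) := by rw [Finset.mul_sum]
  _ ≤ 2 * γ * Real.sqrt ((n:ℝ) * ∑ k ∈ Finset.range n, v k) :=
      mul_le_mul_of_nonneg_left hsum_sqrt (by positivity)
  _ ≤ 2 * γ * Real.sqrt (2 * (n:ℝ) * Sn) := by
      refine mul_le_mul_of_nonneg_left (Real.sqrt_le_sqrt ?_) (by positivity)
      calc (n:ℝ) * ∑ k ∈ Finset.range n, v k ≤ (n:ℝ) * (2 * Sn) :=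
          mul_le_mul_of_nonneg_left hsumv2 (Nat.cast_nonneg n)
      _ = 2 * (n:ℝ) * Sn := by ring
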